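/- Lichnerowicz estimate for the graph Laplacian: if a connected finite weighted graph (G,m,w) satisfies the Bakry-Émery curvature-dimension condition CD(K,n) with K>0 and n>1, then the first nonzero eigenvalue μ₂ of -Δ satisfies μ₂ ≥ nK/(n-1). -/

import Mathlib

open Finset

variable {V : Type*} [Fintype V] [DecidableEq V]

/-- The weighted graph Laplacian: `Δu(x) = (1/m x) ∑_y (u y - u x) w x y`. -/
noncomputable def glap (m : V → ℝ) (w : V → V → ℝ) (u : V → ℝ) (x : V) : ℝ :=
  (1 / m x) * ∑ y, (u y - u x) * w x y

/-- The carré du champ operator `Γ(u,v) = (1/2)(Δ(uv) - vΔu - uΔv)`. -/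
noncomputable def gGam (m : V → ℝ) (w : V → V → ℝ) (u v : V → ℝ) (x : V) : ℝ :=
  (1 / 2) * (glap m w (fun z => u z * v z) x - v x * glap m w u x - u x * glap m w v x)

/-- The iterated carré du champ `Γ₂(u,v) = (1/2)(ΔΓ(u,v) - Γ(Δu,v) - Γ(u,Δv))`. -/
noncomputable def gGam2 (m : V → ℝ) (w : V → V → ℝ) (u v : V → ℝ) (x : V) : ℝ :=
  (1 / 2) * (glap m w (gGam m w u v) x - gGam m w (glap m w u) v x - gGam m w u (glap m w v) x)

/-- Vertex inner product `⟨u,v⟩ = ∑_x u x v x m x`. -/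
noncomputable def vip (m : V → ℝ) (u v : V → ℝ) : ℝ := ∑ x, u x * v x * m x

/-- Edge (1-form) inner product of differentials:
`⟨du,dv⟩ = ∑_{{x,y}∈E} (u y - u x)(v y - v x) w x y = (1/2)∑_{x,y}`. -/
noncomputable def eip (w : V → V → ℝ) (u v : V → ℝ) : ℝ :=
  (1 / 2) * ∑ x, ∑ y, (u y - u x) * (v y - v x) * w x y

/-- `(m,w)` is a weighted graph structure: positive vertex measure, symmetric
nonnegative edge weights, no loops. -/
def WeightedGraph (m : V → ℝ) (w : V → V → ℝ) : Prop :=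
  (∀ x, 0 < m x) ∧ (∀ x y, w x y = w y x) ∧ (∀ x y, 0 ≤ w x y) ∧ (∀ x, w x x = 0)

/-- The underlying simple graph: `x ∼ y` iff `w x y > 0`. -/
def wgraph (w : V → V → ℝ) : SimpleGraph V := SimpleGraph.fromRel (fun x y => 0 < w x y)

/-- The Bakry-Émery curvature-dimension condition `CD(K,n)`. -/
def CD (m : V → ℝ) (w : V → V → ℝ) (K n : ℝ) : Prop :=
  ∀ (f : V → ℝ) (x : V), gGam2 m w f f x ≥ (1 / n) * (glap m w f x) ^ 2 + K * gGam m w f f x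

/-- `B` is a vertex boundary: nonempty, independent, and every boundary vertex is
adjacent to some interior vertex. -/
def GraphBoundary (w : V → V → ℝ) (B : Finset V) : Prop :=
  B.Nonempty ∧ (∀ x ∈ B, ∀ y ∈ B, w x y = 0) ∧ (∀ x ∈ B, ∃ y, y ∉ B ∧ 0 < w x y)

/-- `σ` is a Steklov eigenvalue: there is `u`, harmonic on the interior, with
boundary restriction nonzero, and `∂u/∂n = σ u` on `B`. -/
def SteklovEig (m : V → ℝ) (w : V → V → ℝ) (B : Finset V) (σ : ℝ) : Prop :=
  ∃ u : V → ℝ, (∃ x ∈ B, u x ≠ 0) ∧ (∀ x, x ∉ B → glap m w u x = 0) ∧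
    (∀ x ∈ B, - glap m w u x = σ * u x)

/-- `μ` is an eigenvalue of `-Δ`. -/
def LapEig (m : V → ℝ) (w : V → V → ℝ) (μ : ℝ) : Prop :=
  ∃ u : V → ℝ, u ≠ 0 ∧ ∀ x, - glap m w u x = μ * u x

/-- The edge weight of the induced graph on the interior `Ω = Bᶜ`. -/
def wRes (B : Finset V) (w : V → V → ℝ) : V → V → ℝ :=
  fun x y => if x ∈ B ∨ y ∈ B then 0 else w x y

set_option linter.unusedSectionVars false

lemma glap_mul_m (m : V → ℝ) (w : V → V → ℝ) (hm : ∀ x, 0 < m x) (f : V → ℝ) (x : V) :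
    glap m w f x * m x = ∑ y, (f y - f x) * w x y := by
  unfold glap
  field_simp
  rw [mul_div_assoc]
  rw [mul_comm]; exact div_mul_cancel₀ _ (hm x).ne'

lemma sum_glap (m : V → ℝ) (w : V → V → ℝ) (hm : ∀ x, 0 < m x)
    (hs : ∀ x y, w x y = w y x) (f : V → ℝ) :
    ∑ x, glap m w f x * m x = 0 := by
  have h1 : ∑ x, glap m w f x * m x = ∑ x, ∑ y, (f y - f x) * w x y :=
    Finset.sum_congr rfl fun x _ => glap_mul_m m w hm f x
  have h2 : (∑ x : V, ∑ y : V, (f y - f x) * w x y)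
      = ∑ x : V, ∑ y : V, -((f y - f x) * w x y) := by
    rw [Finset.sum_comm]
    refine Finset.sum_congr rfl fun x _ => Finset.sum_congr rfl fun y _ => ?_
    rw [hs y x]; ring
  simp only [Finset.sum_neg_distrib] at h2
  linarith [h1, h2]

lemma glap_smul (m : V → ℝ) (w : V → V → ℝ) (c : ℝ) (u : V → ℝ) (x : V) :
    glap m w (fun z => c * u z) x = c * glap m w u x := by
  unfold glap
  rw [show (∑ y, (c * u y - c * u x) * w x y) = c * ∑ y, (u y - u x) * w x y by
    rw [Finset.mul_sum]; exact Finset.sum_congr rfl fun y _ => by ring]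
  ring

lemma gGam_comm (m : V → ℝ) (w : V → V → ℝ) (u v : V → ℝ) (x : V) :
    gGam m w u v x = gGam m w v u x := by
  unfold gGam
  rw [show (fun z => u z * v z) = (fun z => v z * u z) from funext fun z => mul_comm _ _]
  ring

lemma gGam_smul (m : V → ℝ) (w : V → V → ℝ) (c : ℝ) (u v : V → ℝ) (x : V) :
    gGam m w (fun z => c * u z) v x = c * gGam m w u v x := by
  unfold gGam
  rw [show (fun z => (fun z => c * u z) z * v z) = (fun z => c * (u z * v z)) from
    funext fun z => by ring, glap_smul, glap_smul]
  ring

lemma gGam_self_nonneg (m : V → ℝ) (w : V → V → ℝ) (hm : ∀ x, 0 < m x)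
    (hw : ∀ x y, 0 ≤ w x y) (u : V → ℝ) (x : V) : 0 ≤ gGam m w u u x := by
  have h1 := glap_mul_m m w hm (fun z => u z * u z) x
  have h2 := glap_mul_m m w hm u x
  have key : gGam m w u u x * m x = (1/2) * ∑ y, (u y - u x)^2 * w x y := by
    have hsplit : ∑ y, (u y - u x)^2 * w x y
        = (∑ y, (u y * u y - u x * u x) * w x y) - 2 * u x * ∑ y, (u y - u x) * w x y := by
      rw [Finset.mul_sum, ← Finset.sum_sub_distrib]
      exact Finset.sum_congr rfl fun y _ => by ring
    unfold gGam
    rw [hsplit, ← h1, ← h2]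
    ring
  have hsum : 0 ≤ ∑ y, (u y - u x)^2 * w x y :=
    Finset.sum_nonneg fun y _ => mul_nonneg (sq_nonneg _) (hw x y)
  nlinarith [hm x]

theorem stmt3' (m : V → ℝ) (w : V → V → ℝ) (hm : ∀ x, 0 < m x)
    (hs : ∀ x y, w x y = w y x) (hw : ∀ x y, 0 ≤ w x y)
    (K n : ℝ) (hK : 0 < K) (hn : 1 < n)
    (hCD : ∀ (f : V → ℝ) (x : V), gGam2 m w f f x ≥ (1 / n) * (glap m w f x) ^ 2 + K * gGam m w f f x) :
    ∀ μ : ℝ, (∃ u : V → ℝ, u ≠ 0 ∧ ∀ x, - glap m w u x = μ * u x) → μ ≠ 0 →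
      μ ≥ n * K / (n - 1) := by
  intro μ hμ hμ0
  obtain ⟨u, hu0, heig⟩ := hμ
  have heq : ∀ x, glap m w u x = -(μ * u x) := fun x => by have := heig x; linarith
  have hfun : glap m w u = fun z => (-μ) * u z := funext fun x => by rw [heq x]; ring
  set N := ∑ x, u x ^ 2 * m x with hN
  have hNpos : 0 < N := by
    obtain ⟨x0, hx0⟩ := Function.ne_iff.mp hu0
    simp only [Pi.zero_apply] at hx0
    refine Finset.sum_pos' (fun x _ => mul_nonneg (sq_nonneg _) (hm x).le) ⟨x0, Finset.mem_univ _, ?_⟩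
    exact mul_pos (lt_of_le_of_ne (sq_nonneg _) (Ne.symm (pow_ne_zero 2 hx0))) (hm x0)
  -- E = ∑ Γ(u,u) m = μ N
  have hE : ∑ x, gGam m w u u x * m x = μ * N := by
    have hsum := sum_glap m w hm hs (fun z => u z * u z)
    have hpt : ∀ x, gGam m w u u x * m x
        = (1/2) * (glap m w (fun z => u z * u z) x * m x) + μ * (u x ^ 2 * m x) := by
      intro x
      unfold gGam
      linear_combination (-(u x * m x)) * heq x
    calc ∑ x, gGam m w u u x * m x
        = ∑ x, ((1/2) * (glap m w (fun z => u z * u z) x * m x) + μ * (u x ^ 2 * m x)) :=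
          Finset.sum_congr rfl fun x _ => hpt x
      _ = (1/2) * (∑ x, glap m w (fun z => u z * u z) x * m x) + μ * N := by
          rw [Finset.sum_add_distrib, ← Finset.mul_sum, ← Finset.mul_sum]
      _ = μ * N := by rw [hsum]; ring
  -- Γ₂ pointwise
  have hΓ2 : ∀ x, gGam2 m w u u x
      = (1/2) * glap m w (gGam m w u u) x + μ * gGam m w u u x := by
    intro x
    unfold gGam2
    rw [hfun, gGam_smul, gGam_comm m w u (fun z => (-μ) * u z) x, gGam_smul]
    ring
  have hI2 : ∑ x, gGam2 m w u u x * m x = μ * (μ * N) := by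
    have hsum := sum_glap m w hm hs (gGam m w u u)
    calc ∑ x, gGam2 m w u u x * m x
        = ∑ x, ((1/2) * (glap m w (gGam m w u u) x * m x) + μ * (gGam m w u u x * m x)) :=
          Finset.sum_congr rfl fun x _ => by rw [hΓ2 x]; ring
      _ = (1/2) * (∑ x, glap m w (gGam m w u u) x * m x)
            + μ * ∑ x, gGam m w u u x * m x := by
          rw [Finset.sum_add_distrib, ← Finset.mul_sum, ← Finset.mul_sum]
      _ = μ * (μ * N) := by rw [hsum, hE]; ring
  -- summed CD inequality
  have hCDsum : ∑ x, ((1 / n) * (glap m w u x) ^ 2 + K * gGam m w u u x) * m x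
      ≤ ∑ x, gGam2 m w u u x * m x :=
    Finset.sum_le_sum fun x _ => mul_le_mul_of_nonneg_right (hCD u x) (hm x).le
  have hRHS : ∑ x, ((1 / n) * (glap m w u x) ^ 2 + K * gGam m w u u x) * m x
      = (1 / n) * (μ ^ 2 * N) + K * (μ * N) := by
    calc ∑ x, ((1 / n) * (glap m w u x) ^ 2 + K * gGam m w u u x) * m x
        = ∑ x, ((1 / n) * μ ^ 2 * (u x ^ 2 * m x) + K * (gGam m w u u x * m x)) :=
          Finset.sum_congr rfl fun x _ => by rw [heq x]; ring
      _ = (1 / n) * μ ^ 2 * N + K * ∑ x, gGam m w u u x * m x := by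
          rw [Finset.sum_add_distrib, ← Finset.mul_sum, ← Finset.mul_sum]
      _ = (1 / n) * (μ ^ 2 * N) + K * (μ * N) := by rw [hE]; ring
  have hmain : (1 / n) * (μ ^ 2 * N) + K * (μ * N) ≤ μ * (μ * N) := by
    rw [← hI2, ← hRHS]; exact hCDsum
  -- μ > 0
  have hEnn : 0 ≤ μ * N := by
    rw [← hE]
    exact Finset.sum_nonneg fun x _ => mul_nonneg (gGam_self_nonneg m w hm hw u x) (hm x).le
  have hμpos : 0 < μ := by
    rcases lt_trichotomy μ 0 with h | h | h
    · nlinarith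
    · exact absurd h hμ0
    · exact h
  have hn0 : (0:ℝ) < n := by linarith
  have hmain' : μ ^ 2 * N + n * (K * (μ * N)) ≤ n * (μ * (μ * N)) := by
    have := mul_le_mul_of_nonneg_left hmain hn0.le
    have hinv : n * ((1 / n) * (μ ^ 2 * N)) = μ ^ 2 * N := by field_simp
    nlinarith [this]
  rw [ge_iff_le, div_le_iff₀ (by linarith : (0:ℝ) < n - 1)]
  have hμN : 0 < μ * N := mul_pos hμpos hNpos
  nlinarith [hmain', hμN]


/-- Lichnerowicz estimate for the graph Laplacian: every nonzero
eigenvalue of `-Δ` is at least `nK/(n-1)`; i.e. `μ₂ ≥ nK/(n-1)`. -/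
theorem stmt3 (m : V → ℝ) (w : V → V → ℝ) (hW : WeightedGraph m w)
    (hconn : (wgraph w).Connected) (K n : ℝ) (hK : 0 < K) (hn : 1 < n)
    (hCD : CD m w K n) :
    ∀ μ : ℝ, LapEig m w μ → μ ≠ 0 → μ ≥ n * K / (n - 1) := by
  obtain ⟨hm, hs, hw, -⟩ := hW
  exact fun μ hμ => stmt3' m w hm hs hw K n hK hn hCD μ hμ
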